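/- (Secret key extraction surviving extra side information.) Let 𝒦', 𝒲, 𝒱 be finite sets and let (K'_X, K'_Y, W, V) be random variables with joint pmf on 𝒦'×𝒦'×𝒲×𝒱. Suppose that for some 0 < ε < 1/2, d(P_{K'_X K'_Y W}, P^(2)_unif × P_W) ≤ ε, where P^(2)_unif(k,k') = 1[k = k']/|𝒦'|. Then there exist a finite set 𝒦 with log₂|𝒦| ≥ log₂|𝒦'| − log₂|𝒱| − 2·log₂(1/(2ε)) and a function κ : 𝒦' → 𝒦 such that, with K_X = κ(K'_X) and K_Y = κ(K'_Y), d(P_{K_X K_Y W V}, Q^(2)_unif × P_{WV}) ≤ 2ε, where Q^(2)_unif(k,k') = 1[k = k']/|𝒦|. -/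

import Mathlib

open scoped Classical
open Finset


private lemma sum_pi_prod {ι β : Type*} [Fintype ι] [DecidableEq ι] [Fintype β]
    (g : ι → β → ℝ) :
    ∑ κ : ι → β, ∏ i, g i (κ i) = ∏ i, ∑ j, g i j :=
  (Fintype.prod_sum g).symm

private lemma sum_eval_one {ι β : Type*} [Fintype ι] [DecidableEq ι] [Fintype β]
    (a : ι) (f : β → ℝ) :
    ∑ κ : ι → β, f (κ a)
      = (Fintype.card β : ℝ) ^ (Fintype.card ι - 1) * ∑ j, f j := by
  have h1 : ∀ κ : ι → β, f (κ a) = ∏ i, (if i = a then f (κ i) else 1) := by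
    intro κ
    rw [Finset.prod_ite_eq' Finset.univ a fun i => f (κ i)]
    simp
  calc ∑ κ : ι → β, f (κ a)
      = ∑ κ : ι → β, ∏ i, (if i = a then f (κ i) else 1) := by
        exact Finset.sum_congr rfl fun κ _ => h1 κ
    _ = ∏ i, ∑ j, (if i = a then f j else 1) := sum_pi_prod (fun i j => if i = a then f j else 1)
    _ = (∑ j, f j) * ∏ i ∈ Finset.univ.erase a, ∑ j, (if i = a then f j else (1:ℝ)) := by
        rw [← Finset.mul_prod_erase Finset.univ _ (Finset.mem_univ a)]
        simp
    _ = (Fintype.card β : ℝ) ^ (Fintype.card ι - 1) * ∑ j, f j := by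
        have h2 : ∀ i ∈ Finset.univ.erase a,
            (∑ j, if i = a then f j else (1:ℝ)) = (Fintype.card β : ℝ) := by
          intro i hi
          have hia : i ≠ a := Finset.ne_of_mem_erase hi
          simp [hia, Finset.card_univ]
        rw [Finset.prod_congr rfl h2, Finset.prod_const,
          Finset.card_erase_of_mem (Finset.mem_univ a), Finset.card_univ, mul_comm]

private lemma sum_eval_two_zero {ι β : Type*} [Fintype ι] [DecidableEq ι] [Fintype β]
    {a b : ι} (hab : a ≠ b) (f g : β → ℝ) (hf : ∑ j, f j = 0) :
    ∑ κ : ι → β, f (κ a) * g (κ b) = 0 := by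
  have h1 : ∀ κ : ι → β, f (κ a) * g (κ b)
      = ∏ i, (if i = a then f (κ i) else if i = b then g (κ i) else 1) := by
    intro κ
    rw [← Finset.mul_prod_erase Finset.univ _ (Finset.mem_univ a)]
    have hb : b ∈ Finset.univ.erase a := Finset.mem_erase.mpr ⟨hab.symm, Finset.mem_univ b⟩
    rw [← Finset.mul_prod_erase _ _ hb]
    have h3 : ∏ i ∈ (Finset.univ.erase a).erase b,
        (if i = a then f (κ i) else if i = b then g (κ i) else 1) = 1 := by
      apply Finset.prod_eq_one
      intro i hi
      have hib : i ≠ b := Finset.ne_of_mem_erase hi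
      have hia : i ≠ a := Finset.ne_of_mem_erase (Finset.mem_of_mem_erase hi)
      simp [hia, hib]
    rw [h3]
    have hba : ¬ (b = a) := fun h => hab h.symm
    simp [hba]
  calc ∑ κ : ι → β, f (κ a) * g (κ b)
      = ∑ κ : ι → β, ∏ i, (if i = a then f (κ i) else if i = b then g (κ i) else 1) :=
        Finset.sum_congr rfl fun κ _ => h1 κ
    _ = ∏ i, ∑ j, (if i = a then f j else if i = b then g j else 1) :=
        sum_pi_prod (fun i j => if i = a then f j else if i = b then g j else 1)
    _ = 0 := by
        apply Finset.prod_eq_zero (Finset.mem_univ a)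
        simpa using hf

private lemma sum_comm3 {α β γ : Type*} [Fintype α] [Fintype β] [Fintype γ]
    (f : α → β → γ → ℝ) :
    ∑ a, ∑ b, ∑ c, f a b c = ∑ c, ∑ a, ∑ b, f a b c := by
  calc ∑ a, ∑ b, ∑ c, f a b c
      = ∑ a, ∑ c, ∑ b, f a b c := Finset.sum_congr rfl fun a _ => Finset.sum_comm
    _ = ∑ c, ∑ a, ∑ b, f a b c := Finset.sum_comm

private lemma sum_rot3 {α β γ : Type*} [Fintype α] [Fintype β] [Fintype γ]
    (f : α → β → γ → ℝ) :
    ∑ a, ∑ b, ∑ c, f a b c = ∑ b, ∑ c, ∑ a, f a b c := by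
  rw [sum_comm3]
  calc ∑ c, ∑ a, ∑ b, f a b c
      = ∑ b, ∑ c, ∑ a, f a b c := by
        rw [sum_comm3 (f := fun c a b => f a b c)]

private lemma sum_rot4 {α β γ δ : Type*} [Fintype α] [Fintype β] [Fintype γ] [Fintype δ]
    (f : α → β → γ → δ → ℝ) :
    ∑ a, ∑ b, ∑ c, ∑ d, f a b c d = ∑ b, ∑ c, ∑ d, ∑ a, f a b c d := by
  rw [sum_rot3 (f := fun a b c => ∑ d, f a b c d)]
  exact Finset.sum_congr rfl fun b _ => Finset.sum_congr rfl fun c _ => Finset.sum_comm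

private lemma sum_comm4 {α β γ δ : Type*} [Fintype α] [Fintype β] [Fintype γ] [Fintype δ]
    (f : α → β → γ → δ → ℝ) :
    ∑ a, ∑ b, ∑ c, ∑ d, f a b c d = ∑ c, ∑ d, ∑ a, ∑ b, f a b c d := by
  rw [sum_rot4, sum_rot4 (f := fun b c d a => f a b c d)]

private lemma sum_abs_le_sqrt {α : Type*} [Fintype α] (f : α → ℝ) :
    ∑ i, |f i| ≤ Real.sqrt ((Fintype.card α : ℝ) * ∑ i, (f i) ^ 2) := by
  have h := Finset.sum_mul_sq_le_sq_mul_sq Finset.univ (fun _ => (1:ℝ)) (fun i => |f i|)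
  simp only [one_mul, one_pow, sq_abs, Finset.sum_const, Finset.card_univ, nsmul_eq_mul,
    mul_one] at h
  rw [show ((Fintype.card α : ℝ) * ∑ i, (f i) ^ 2)
      = (Fintype.card α : ℝ) * ∑ i, (f i) ^ 2 from rfl]
  rw [Real.le_sqrt (Finset.sum_nonneg fun i _ => abs_nonneg (f i))]
  · exact h
  · positivity

set_option maxHeartbeats 1000000 in
private lemma sum_sq_indicator {ι β : Type*} [Fintype ι] [DecidableEq ι] [Fintype β]
    [DecidableEq β] (k : β) (R : ι → ℝ) :
    ∑ κ : ι → β, (∑ a, ((if κ a = k then (1:ℝ) else 0) - 1 / (Fintype.card β : ℝ)) * R a) ^ 2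
      = (Fintype.card β : ℝ) ^ (Fintype.card ι - 1) * (1 - 1 / (Fintype.card β : ℝ))
          * ∑ a, (R a) ^ 2 := by
  have hβ : Nonempty β := ⟨k⟩
  have hn0 : (0:ℝ) < (Fintype.card β : ℝ) := by
    exact_mod_cast Fintype.card_pos
  set n : ℝ := (Fintype.card β : ℝ) with hn
  set e : β → ℝ := fun j => (if j = k then (1:ℝ) else 0) - 1 / n with he
  have he_sum : ∑ j, e j = 0 := by
    simp only [he, Finset.sum_sub_distrib, Finset.sum_ite_eq' Finset.univ k (fun _ => (1:ℝ)),
      Finset.mem_univ, if_true, Finset.sum_const, Finset.card_univ, nsmul_eq_mul]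
    field_simp
    simp [hn]
  have he_sq : ∑ j, (e j) ^ 2 = 1 - 1 / n := by
    have : ∀ j, (e j) ^ 2 = (if j = k then (1:ℝ) else 0) * (1 - 2 / n) + 1 / n ^ 2 := by
      intro j
      by_cases h : j = k <;> simp [he, h] <;> field_simp <;> ring
    rw [Finset.sum_congr rfl fun j _ => this j]
    simp only [Finset.sum_add_distrib, ← Finset.sum_mul,
      Finset.sum_ite_eq' Finset.univ k (fun _ => (1:ℝ)), Finset.mem_univ, if_true,
      Finset.sum_const, Finset.card_univ, nsmul_eq_mul]
    rw [← hn]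
    field_simp
    ring
  -- expand the square
  have expand : ∀ κ : ι → β, (∑ a, e (κ a) * R a) ^ 2
      = ∑ a, ∑ b, (R a * R b) * (e (κ a) * e (κ b)) := by
    intro κ
    rw [sq, Finset.sum_mul_sum]
    exact Finset.sum_congr rfl fun a _ => Finset.sum_congr rfl fun b _ => by ring
  calc ∑ κ : ι → β, (∑ a, ((if κ a = k then (1:ℝ) else 0) - 1 / n) * R a) ^ 2
      = ∑ κ : ι → β, ∑ a, ∑ b, (R a * R b) * (e (κ a) * e (κ b)) :=
        Finset.sum_congr rfl fun κ _ => expand κ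
    _ = ∑ a, ∑ b, ∑ κ : ι → β, (R a * R b) * (e (κ a) * e (κ b)) := by
        exact sum_rot3 (α := ι → β) (β := ι) (γ := ι)
          (fun κ a b => (R a * R b) * (e (κ a) * e (κ b)))
    _ = ∑ a, ∑ b, (R a * R b) * ∑ κ : ι → β, e (κ a) * e (κ b) := by
        exact Finset.sum_congr rfl fun a _ => Finset.sum_congr rfl fun b _ =>
          (Finset.mul_sum _ _ _).symm
    _ = ∑ a, (R a * R a) * (n ^ (Fintype.card ι - 1) * (1 - 1 / n)) := by
        refine Finset.sum_congr rfl fun a _ => ?_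
        rw [Finset.sum_eq_single a]
        · congr 1
          have := sum_eval_one a (fun j => (e j) ^ 2)
          simp only [← sq] at *
          rw [this, he_sq]
        · intro b _ hba
          rw [sum_eval_two_zero (Ne.symm hba) e e he_sum]
          ring
        · intro h; exact absurd (Finset.mem_univ a) h
    _ = n ^ (Fintype.card ι - 1) * (1 - 1 / n) * ∑ a, (R a) ^ 2 := by
        rw [Finset.mul_sum]
        exact Finset.sum_congr rfl fun a _ => by ring


private lemma exists_R {K' W V : Type*} [Fintype K'] [Fintype W] [Fintype V]
    [DecidableEq K'] [Nonempty K'] (P : K' → K' → W → V → ℝ)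
    (hP0 : ∀ a b w v, 0 ≤ P a b w v) :
    ∃ R : K' → W → V → ℝ,
      (∀ a w v, 0 ≤ R a w v) ∧
      (∀ a w v, R a w v ≤ P a a w v) ∧
      (∀ a w v, R a w v ≤ (∑ a', ∑ b', ∑ v', P a' b' w v') / (Fintype.card K' : ℝ)) ∧
      (∀ a w, ∑ v, R a w v
        = min (∑ v, P a a w v)
            ((∑ a', ∑ b', ∑ v', P a' b' w v') / (Fintype.card K' : ℝ))) := by
  classical
  set M : ℝ := (Fintype.card K' : ℝ) with hM
  have hM0 : 0 < M := by rw [hM]; exact_mod_cast Fintype.card_pos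
  set Wf : W → ℝ := fun w => ∑ a', ∑ b', ∑ v', P a' b' w v' with hWf
  have hWf0 : ∀ w, 0 ≤ Wf w := fun w =>
    Finset.sum_nonneg fun a _ => Finset.sum_nonneg fun b _ =>
      Finset.sum_nonneg fun v _ => hP0 _ _ _ _
  set Pd : K' → W → ℝ := fun a w => ∑ v, P a a w v with hPd
  have hPd0 : ∀ a w, 0 ≤ Pd a w := fun a w => Finset.sum_nonneg fun v _ => hP0 _ _ _ _
  have hle : ∀ a w v, P a a w v ≤ Pd a w := fun a w v =>
    Finset.single_le_sum (fun v _ => hP0 a a w v) (Finset.mem_univ v)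
  set lam : K' → W → ℝ := fun a w => min 1 (Wf w / (M * Pd a w)) with hlam
  have hlam0 : ∀ a w, 0 ≤ lam a w := fun a w =>
    le_min zero_le_one (div_nonneg (hWf0 w) (mul_nonneg hM0.le (hPd0 a w)))
  have hlam1 : ∀ a w, lam a w ≤ 1 := fun a w => min_le_left _ _
  refine ⟨fun a w v => P a a w v * lam a w, ?_, ?_, ?_, ?_⟩
  · intro a w v; exact mul_nonneg (hP0 _ _ _ _) (hlam0 a w)
  · intro a w v; exact mul_le_of_le_one_right (hP0 _ _ _ _) (hlam1 a w)
  · intro a w v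
    by_cases hp : Pd a w = 0
    · have hPz : P a a w v = 0 := le_antisymm (hp ▸ hle a w v) (hP0 _ _ _ _)
      simp only [hPz, zero_mul]
      exact div_nonneg (hWf0 w) hM0.le
    · have hp0 : 0 < Pd a w := lt_of_le_of_ne (hPd0 a w) (Ne.symm hp)
      calc P a a w v * lam a w ≤ Pd a w * lam a w :=
            mul_le_mul_of_nonneg_right (hle a w v) (hlam0 a w)
        _ ≤ Pd a w * (Wf w / (M * Pd a w)) :=
            mul_le_mul_of_nonneg_left (min_le_right _ _) (hPd0 a w)
        _ = Wf w / M := by field_simp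
  · intro a w
    simp only []
    have hPbsum : ∑ v, P a a w v * lam a w = Pd a w * lam a w := by
      rw [← Finset.sum_mul]
    rw [hPbsum]
    by_cases hp : Pd a w = 0
    · rw [hp, zero_mul]
      have : min (Pd a w) (Wf w / M) = 0 := by
        rw [hp]; exact min_eq_left (div_nonneg (hWf0 w) hM0.le)
      rw [← hp] at this ⊢
      rw [this]
    · have hp0 : 0 < Pd a w := lt_of_le_of_ne (hPd0 a w) (Ne.symm hp)
      rw [hlam, mul_min_of_nonneg _ _ (hPd0 a w), mul_one]
      congr 1
      field_simp
      ring

private lemma smoothing_bound {K' W V : Type*} [Fintype K'] [Fintype W] [Fintype V]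
    [DecidableEq K'] [Nonempty K'] (P : K' → K' → W → V → ℝ)
    (hP0 : ∀ a b w v, 0 ≤ P a b w v)
    (hP1 : ∑ a, ∑ b, ∑ w, ∑ v, P a b w v = 1)
    (ε : ℝ)
    (hsec : (∑ a, ∑ b, ∑ w,
        |(∑ v, P a b w v)
          - (if a = b then (1 : ℝ) / (Fintype.card K' : ℝ) else 0)
            * (∑ a', ∑ b', ∑ v, P a' b' w v)|) / 2 ≤ ε)
    (R : K' → W → V → ℝ)
    (hRsum : ∀ a w, ∑ v, R a w v
        = min (∑ v, P a a w v)
            ((∑ a', ∑ b', ∑ v', P a' b' w v') / (Fintype.card K' : ℝ))) :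
    1 - (∑ a, ∑ w, ∑ v, R a w v) ≤ ε := by
  classical
  set M : ℝ := (Fintype.card K' : ℝ) with hM
  have hM0 : 0 < M := by rw [hM]; exact_mod_cast Fintype.card_pos
  set Pb : K' → K' → W → ℝ := fun a b w => ∑ v, P a b w v with hPb
  set Wf : W → ℝ := fun w => ∑ a', ∑ b', ∑ v', P a' b' w v' with hWf
  have hPb0 : ∀ a b w, 0 ≤ Pb a b w := fun a b w =>
    Finset.sum_nonneg fun v _ => hP0 _ _ _ _
  have hWsum : ∑ w, Wf w = 1 := by
    rw [← hP1]
    exact (sum_comm3 (f := fun a b w => ∑ v, P a b w v)).symm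
  have hsec' : (∑ a, ∑ b, ∑ w,
      |Pb a b w - (if a = b then (1:ℝ)/M else 0) * Wf w|) / 2 ≤ ε := hsec
  have hP1eq : ∑ a, ∑ b, ∑ w, Pb a b w = 1 := hP1
  have key : ∀ a b w, Pb a b w - (if a = b then min (Pb a a w) (Wf w / M) else 0)
      = (|Pb a b w - (if a = b then (1:ℝ)/M else 0) * Wf w|
         + (Pb a b w - (if a = b then (1:ℝ)/M else 0) * Wf w)) / 2 := by
    intro a b w
    by_cases h : a = b
    · subst h
      simp only [eq_self_iff_true, if_true]
      have hq : (1:ℝ)/M * Wf w = Wf w / M := by ring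
      rw [hq]
      rcases le_total (Pb a a w) (Wf w / M) with hc | hc
      · rw [min_eq_left hc, abs_of_nonpos (by linarith)]; ring
      · rw [min_eq_right hc, abs_of_nonneg (by linarith)]; ring
    · simp only [if_neg h, zero_mul, sub_zero]
      rw [abs_of_nonneg (hPb0 a b w)]
      ring
  have hs_eq : ∑ a, ∑ b, ∑ w,
      (Pb a b w - (if a = b then min (Pb a a w) (Wf w / M) else 0))
      = 1 - ∑ a, ∑ w, ∑ v, R a w v := by
    simp only [Finset.sum_sub_distrib]
    rw [hP1eq]
    congr 1
    refine Finset.sum_congr rfl fun a _ => ?_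
    have h1 : ∀ b, ∑ w, (if a = b then min (Pb a a w) (Wf w / M) else 0)
        = (if a = b then ∑ w, min (Pb a a w) (Wf w / M) else 0) := by
      intro b; by_cases h : a = b <;> simp [h]
    have h1' : ∑ b, ∑ w, (if a = b then min (Pb a a w) (Wf w / M) else 0)
        = ∑ b, (if a = b then ∑ w, min (Pb a a w) (Wf w / M) else 0) :=
      Finset.sum_congr rfl fun b _ => h1 b
    rw [h1']
    simp only [Finset.sum_ite_eq, Finset.mem_univ, if_true]
    refine Finset.sum_congr rfl fun w _ => ?_
    exact (hRsum a w).symm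
  have hQsum : ∑ a : K', ∑ b : K', ∑ w : W, (if a = b then (1:ℝ)/M else 0) * Wf w = 1 := by
    have h1 : ∀ a b : K', ∑ w : W, (if a = b then (1:ℝ)/M else 0) * Wf w
        = (if a = b then (1/M) * ∑ w, Wf w else 0) := by
      intro a b; by_cases h : a = b <;> simp [h, Finset.mul_sum]
    have h1' : ∑ a : K', ∑ b : K', ∑ w : W, (if a = b then (1:ℝ)/M else 0) * Wf w
        = ∑ a : K', ∑ b : K', (if a = b then (1/M) * ∑ w, Wf w else 0) :=
      Finset.sum_congr rfl fun a _ => Finset.sum_congr rfl fun b _ => h1 a b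
    rw [h1']
    have h2 : ∀ a : K', ∑ b, (if a = b then (1/M) * ∑ w, Wf w else 0)
        = (1/M) * ∑ w, Wf w := by
      intro a
      simp only [Finset.sum_ite_eq, Finset.mem_univ, if_true]
    have h2' : ∑ a : K', ∑ b, (if a = b then (1/M) * ∑ w, Wf w else 0)
        = ∑ _a : K', (1/M) * ∑ w, Wf w :=
      Finset.sum_congr rfl fun a _ => h2 a
    rw [h2', Finset.sum_const, Finset.card_univ, hWsum, nsmul_eq_mul, mul_one, ← hM]
    field_simp
  have final : 1 - (∑ a, ∑ w, ∑ v, R a w v)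
      = (∑ a, ∑ b, ∑ w, |Pb a b w - (if a = b then (1:ℝ)/M else 0) * Wf w|) / 2
        + ((∑ a, ∑ b, ∑ w, Pb a b w)
           - ∑ a : K', ∑ b : K', ∑ w : W, (if a = b then (1:ℝ)/M else 0) * Wf w) / 2 := by
    rw [← hs_eq]
    have key' : ∑ a, ∑ b, ∑ w,
        (Pb a b w - (if a = b then min (Pb a a w) (Wf w / M) else 0))
        = ∑ a, ∑ b, ∑ w,
          ((|Pb a b w - (if a = b then (1:ℝ)/M else 0) * Wf w|
            + (Pb a b w - (if a = b then (1:ℝ)/M else 0) * Wf w)) / 2) :=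
      Finset.sum_congr rfl fun a _ => Finset.sum_congr rfl fun b _ =>
        Finset.sum_congr rfl fun w _ => key a b w
    rw [key']
    simp only [add_div, sub_div, Finset.sum_add_distrib, Finset.sum_sub_distrib,
      ← Finset.sum_div]
  rw [final, hP1eq, hQsum]
  simp only [sub_self, zero_div, add_zero]
  linarith [hsec']

private lemma decomp {K' W V : Type*} [Fintype K'] [Fintype W] [Fintype V]
    [DecidableEq K'] (P : K' → K' → W → V → ℝ)
    (hP0 : ∀ a b w v, 0 ≤ P a b w v)
    (hP1 : ∑ a, ∑ b, ∑ w, ∑ v, P a b w v = 1)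
    (R : K' → W → V → ℝ)
    (hR0 : ∀ a w v, 0 ≤ R a w v)
    (hRP : ∀ a w v, R a w v ≤ P a a w v)
    (N : ℕ) (hN0 : 0 < N) (κ : K' → Fin N) :
    (∑ k : Fin N, ∑ k' : Fin N, ∑ w, ∑ v,
      |(∑ a, ∑ b, if κ a = k ∧ κ b = k' then P a b w v else 0)
        - (if k = k' then (1 : ℝ) / (N : ℝ) else 0) * (∑ a, ∑ b, P a b w v)|)
    ≤ 2 * (1 - ∑ a, ∑ w, ∑ v, R a w v)
      + ∑ k : Fin N, ∑ w, ∑ v,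
          |∑ a, ((if κ a = k then (1:ℝ) else 0) - 1/(N:ℝ)) * R a w v| := by
  classical
  have hNr : (0:ℝ) < (N:ℝ) := by exact_mod_cast hN0
  have hT'T : ∀ w v, (∑ a, R a w v) ≤ ∑ a, ∑ b, P a b w v := by
    intro w v
    apply Finset.sum_le_sum
    intro a _
    exact (hRP a w v).trans
      (Finset.single_le_sum (fun b _ => hP0 a b w v) (Finset.mem_univ a))
  have hR0' : ∀ w v, 0 ≤ ∑ a, R a w v := fun w v =>
    Finset.sum_nonneg fun a _ => hR0 a w v
  -- pointwise triangle inequality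
  have tri : ∀ (k k' : Fin N) (w : W) (v : V),
      |(∑ a, ∑ b, if κ a = k ∧ κ b = k' then P a b w v else 0)
        - (if k = k' then (1 : ℝ) / (N : ℝ) else 0) * (∑ a, ∑ b, P a b w v)|
      ≤ ((∑ a, ∑ b, if κ a = k ∧ κ b = k' then P a b w v else 0)
          - (∑ a, ∑ b, if κ a = k ∧ κ b = k' then (if a = b then R a w v else 0) else 0))
        + |(∑ a, ∑ b, if κ a = k ∧ κ b = k' then (if a = b then R a w v else 0) else 0)
            - (if k = k' then (1 : ℝ) / (N : ℝ) else 0) * (∑ a, R a w v)|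
        + (if k = k' then (1 : ℝ) / (N : ℝ) else 0)
            * ((∑ a, ∑ b, P a b w v) - (∑ a, R a w v)) := by
    intro k k' w v
    set B : ℝ := ∑ a, ∑ b, if κ a = k ∧ κ b = k' then P a b w v else 0 with hB
    set B' : ℝ := ∑ a, ∑ b, if κ a = k ∧ κ b = k' then (if a = b then R a w v else 0) else 0
      with hB'
    set q : ℝ := (if k = k' then (1 : ℝ) / (N : ℝ) else 0) with hq
    have hq0 : 0 ≤ q := by
      rw [hq]; split_ifs
      · positivity
      · exact le_rfl
    have hBB' : B' ≤ B := by
      apply Finset.sum_le_sum; intro a _; apply Finset.sum_le_sum; intro b _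
      by_cases h : κ a = k ∧ κ b = k'
      · simp only [if_pos h]
        by_cases hab : a = b
        · subst hab; simp only [if_pos rfl]; exact hRP a w v
        · simp only [if_neg hab]; exact hP0 a b w v
      · simp [h]
    have h1 : |B - q * (∑ a, ∑ b, P a b w v)|
        ≤ |B - B'| + |B' - q * (∑ a, R a w v)|
          + |q * (∑ a, R a w v) - q * (∑ a, ∑ b, P a b w v)| := by
      calc |B - q * (∑ a, ∑ b, P a b w v)|
          ≤ |B - B'| + |B' - q * (∑ a, ∑ b, P a b w v)| := abs_sub_le _ _ _
        _ ≤ |B - B'| + (|B' - q * (∑ a, R a w v)|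
              + |q * (∑ a, R a w v) - q * (∑ a, ∑ b, P a b w v)|) := by
            exact add_le_add le_rfl (abs_sub_le _ _ _)
        _ = _ := by ring
    have h2 : |B - B'| = B - B' := abs_of_nonneg (by linarith)
    have h3 : |q * (∑ a, R a w v) - q * (∑ a, ∑ b, P a b w v)|
        = q * ((∑ a, ∑ b, P a b w v) - (∑ a, R a w v)) := by
      rw [← mul_sub, abs_mul, abs_of_nonneg hq0,
        abs_of_nonpos (by linarith [hT'T w v])]
      ring
    rw [h2, h3] at h1
    linarith
  -- sum the triangle inequality
  have sum_tri : (∑ k : Fin N, ∑ k' : Fin N, ∑ w, ∑ v,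
      |(∑ a, ∑ b, if κ a = k ∧ κ b = k' then P a b w v else 0)
        - (if k = k' then (1 : ℝ) / (N : ℝ) else 0) * (∑ a, ∑ b, P a b w v)|)
      ≤ (∑ k : Fin N, ∑ k' : Fin N, ∑ w, ∑ v,
          ((∑ a, ∑ b, if κ a = k ∧ κ b = k' then P a b w v else 0)
            - (∑ a, ∑ b, if κ a = k ∧ κ b = k' then (if a = b then R a w v else 0) else 0)))
        + (∑ k : Fin N, ∑ k' : Fin N, ∑ w, ∑ v,
            |(∑ a, ∑ b, if κ a = k ∧ κ b = k' then (if a = b then R a w v else 0) else 0)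
              - (if k = k' then (1 : ℝ) / (N : ℝ) else 0) * (∑ a, R a w v)|)
        + (∑ k : Fin N, ∑ k' : Fin N, ∑ w, ∑ v,
            (if k = k' then (1 : ℝ) / (N : ℝ) else 0)
              * ((∑ a, ∑ b, P a b w v) - (∑ a, R a w v))) := by
    rw [← Finset.sum_add_distrib, ← Finset.sum_add_distrib]
    apply Finset.sum_le_sum; intro k _
    rw [← Finset.sum_add_distrib, ← Finset.sum_add_distrib]
    apply Finset.sum_le_sum; intro k' _
    rw [← Finset.sum_add_distrib, ← Finset.sum_add_distrib]
    apply Finset.sum_le_sum; intro w _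
    rw [← Finset.sum_add_distrib, ← Finset.sum_add_distrib]
    apply Finset.sum_le_sum; intro v _
    exact tri k k' w v
  -- collapse lemma over the key alphabet
  have collapse : ∀ (f : K' → K' → ℝ),
      ∑ k : Fin N, ∑ k' : Fin N, ∑ a, ∑ b, (if κ a = k ∧ κ b = k' then f a b else 0)
        = ∑ a, ∑ b, f a b := by
    intro f
    rw [sum_comm4 (α := Fin N) (β := Fin N) (γ := K') (δ := K')
      (f := fun k k' a b => if κ a = k ∧ κ b = k' then f a b else 0)]
    refine Finset.sum_congr rfl fun a _ => Finset.sum_congr rfl fun b _ => ?_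
    have h1 : ∀ k : Fin N, ∑ k' : Fin N, (if κ a = k ∧ κ b = k' then f a b else 0)
        = (if κ a = k then f a b else 0) := by
      intro k
      by_cases h : κ a = k <;> simp [h]
    rw [Finset.sum_congr rfl fun k _ => h1 k]
    simp
  have hdiagsum : ∀ (w : W) (v : V), (∑ a, ∑ b, if a = b then R a w v else 0)
      = ∑ a, R a w v := by
    intro w v
    refine Finset.sum_congr rfl fun a _ => ?_
    simp
  have hC : ∑ w, ∑ v, ((∑ a, ∑ b, P a b w v) - (∑ a, R a w v))
      = 1 - ∑ a, ∑ w, ∑ v, R a w v := by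
    simp only [Finset.sum_sub_distrib]
    congr 1
    · rw [sum_comm4 (α := W) (β := V) (γ := K') (δ := K')
        (f := fun w v a b => P a b w v)]
      exact hP1
    · exact (sum_rot3 (α := K') (β := W) (γ := V) (f := fun a w v => R a w v)).symm
  have hA1 : (∑ k : Fin N, ∑ k' : Fin N, ∑ w, ∑ v,
      ((∑ a, ∑ b, if κ a = k ∧ κ b = k' then P a b w v else 0)
        - (∑ a, ∑ b, if κ a = k ∧ κ b = k' then (if a = b then R a w v else 0) else 0)))
      = 1 - ∑ a, ∑ w, ∑ v, R a w v := by
    rw [sum_comm4 (α := Fin N) (β := Fin N) (γ := W) (δ := V)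
      (f := fun k k' w v =>
        ((∑ a, ∑ b, if κ a = k ∧ κ b = k' then P a b w v else 0)
          - (∑ a, ∑ b, if κ a = k ∧ κ b = k' then (if a = b then R a w v else 0) else 0)))]
    rw [← hC]
    refine Finset.sum_congr rfl fun w _ => Finset.sum_congr rfl fun v _ => ?_
    simp only [Finset.sum_sub_distrib]
    rw [collapse (fun a b => P a b w v),
      collapse (fun a b => if a = b then R a w v else 0), hdiagsum w v]
  have hA3 : (∑ k : Fin N, ∑ k' : Fin N, ∑ w, ∑ v,
      (if k = k' then (1 : ℝ) / (N : ℝ) else 0)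
        * ((∑ a, ∑ b, P a b w v) - (∑ a, R a w v)))
      = 1 - ∑ a, ∑ w, ∑ v, R a w v := by
    have e1 : ∀ k k' : Fin N, (∑ w, ∑ v, (if k = k' then (1 : ℝ) / (N : ℝ) else 0)
        * ((∑ a, ∑ b, P a b w v) - (∑ a, R a w v)))
        = (if k = k' then (1 : ℝ) / (N : ℝ) else 0)
            * ∑ w, ∑ v, ((∑ a, ∑ b, P a b w v) - (∑ a, R a w v)) := by
      intro k k'
      rw [Finset.mul_sum]
      exact Finset.sum_congr rfl fun w _ => (Finset.mul_sum _ _ _).symm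
    rw [Finset.sum_congr rfl fun k _ => Finset.sum_congr rfl fun k' _ => e1 k k']
    simp only [ite_mul, zero_mul, Finset.sum_ite_eq, Finset.mem_univ, if_true]
    rw [Finset.sum_const, Finset.card_univ, Fintype.card_fin, nsmul_eq_mul, hC]
    field_simp
  have hA2 : (∑ k : Fin N, ∑ k' : Fin N, ∑ w, ∑ v,
      |(∑ a, ∑ b, if κ a = k ∧ κ b = k' then (if a = b then R a w v else 0) else 0)
        - (if k = k' then (1 : ℝ) / (N : ℝ) else 0) * (∑ a, R a w v)|)
      = ∑ k : Fin N, ∑ w, ∑ v,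
          |∑ a, ((if κ a = k then (1:ℝ) else 0) - 1/(N:ℝ)) * R a w v| := by
    refine Finset.sum_congr rfl fun k _ => ?_
    have h0 : ∀ k' ∈ Finset.univ, k' ≠ k → (∑ w, ∑ v,
        |(∑ a, ∑ b, if κ a = k ∧ κ b = k' then (if a = b then R a w v else 0) else 0)
          - (if k = k' then (1 : ℝ) / (N : ℝ) else 0) * (∑ a, R a w v)|) = 0 := by
      intro k' _ hk'
      refine Finset.sum_eq_zero fun w _ => Finset.sum_eq_zero fun v _ => ?_
      have hB0 : (∑ a, ∑ b, if κ a = k ∧ κ b = k'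
          then (if a = b then R a w v else 0) else 0) = 0 := by
        refine Finset.sum_eq_zero fun a _ => Finset.sum_eq_zero fun b _ => ?_
        by_cases h : κ a = k ∧ κ b = k'
        · by_cases hab : a = b
          · exfalso
            apply hk'
            subst hab
            rw [← h.2, h.1]
          · simp [h, hab]
        · simp [h]
      rw [hB0, if_neg (fun h => hk' h.symm), zero_mul, sub_zero, abs_zero]
    rw [Finset.sum_eq_single_of_mem k (Finset.mem_univ k) h0]
    refine Finset.sum_congr rfl fun w _ => Finset.sum_congr rfl fun v _ => ?_
    have hBdiag : (∑ a, ∑ b, if κ a = k ∧ κ b = k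
        then (if a = b then R a w v else 0) else 0)
        = ∑ a, (if κ a = k then R a w v else 0) := by
      refine Finset.sum_congr rfl fun a _ => ?_
      rw [Finset.sum_eq_single_of_mem a (Finset.mem_univ a) ?side]
      · by_cases h : κ a = k <;> simp [h]
      case side =>
        intro b _ hba
        by_cases h : κ a = k ∧ κ b = k
        · simp [h, Ne.symm hba]
        · simp [h]
    rw [hBdiag, if_pos rfl]
    congr 1
    rw [Finset.mul_sum, ← Finset.sum_sub_distrib]
    refine Finset.sum_congr rfl fun a _ => ?_
    by_cases h : κ a = k
    · simp only [h, if_true]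
      ring
    · simp only [h, if_false]
      ring
  rw [hA1, hA2, hA3] at sum_tri
  linarith


set_option maxHeartbeats 1000000 in
private lemma expectation_bound {K' W V : Type*} [Fintype K'] [Fintype W] [Fintype V]
    [DecidableEq K'] [Nonempty K'] [Nonempty V]
    (P : K' → K' → W → V → ℝ)
    (hP0 : ∀ a b w v, 0 ≤ P a b w v)
    (hP1 : ∑ a, ∑ b, ∑ w, ∑ v, P a b w v = 1)
    (ε : ℝ) (hε0 : 0 < ε)
    (R : K' → W → V → ℝ)
    (hR0 : ∀ a w v, 0 ≤ R a w v)
    (hRW : ∀ a w v, R a w v ≤ (∑ a', ∑ b', ∑ v', P a' b' w v') / (Fintype.card K' : ℝ))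
    (hRT : ∀ w v, (∑ a, R a w v) ≤ ∑ a, ∑ b, P a b w v)
    (N : ℕ) (hN0 : 0 < N)
    (hNbound : ((N:ℝ) - 1) * (Fintype.card V : ℝ) ≤ (2*ε)^2 * (Fintype.card K' : ℝ)) :
    ∑ κ : K' → Fin N, (∑ k : Fin N, ∑ w, ∑ v,
        |∑ a, ((if κ a = k then (1:ℝ) else 0) - 1/(N:ℝ)) * R a w v|)
      ≤ (Fintype.card (K' → Fin N) : ℝ) * (2*ε) := by
  classical
  set Mn : ℕ := Fintype.card K' with hMn
  have hMn1 : 1 ≤ Mn := Fintype.card_pos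
  have hMr : (0:ℝ) < (Mn : ℝ) := by exact_mod_cast Fintype.card_pos
  have hVr : (0:ℝ) < (Fintype.card V : ℝ) := by exact_mod_cast Fintype.card_pos
  set Vc : ℝ := (Fintype.card V : ℝ) with hVc
  have hNr : (0:ℝ) < (N:ℝ) := by exact_mod_cast hN0
  have hN1 : (0:ℝ) ≤ (N:ℝ) - 1 := by
    have : (1:ℝ) ≤ (N:ℝ) := by exact_mod_cast hN0
    linarith
  set F : ℝ := (Fintype.card (K' → Fin N) : ℝ) with hF
  set E : ℝ := (N:ℝ)^(Mn - 1) with hE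
  have hE0 : (0:ℝ) ≤ E := by positivity
  have hFeq : F = E * (N:ℝ) := by
    rw [hF, hE, Fintype.card_fun, Fintype.card_fin]
    push_cast
    rw [← pow_succ]
    congr 1
    omega
  set Tf : W → V → ℝ := fun w v => ∑ a, ∑ b, P a b w v with hTf
  set Wf : W → ℝ := fun w => ∑ a', ∑ b', ∑ v', P a' b' w v' with hWf
  have hT0 : ∀ w v, 0 ≤ Tf w v := fun w v =>
    Finset.sum_nonneg fun a _ => Finset.sum_nonneg fun b _ => hP0 _ _ _ _
  have hWf0 : ∀ w, 0 ≤ Wf w := fun w =>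
    Finset.sum_nonneg fun a _ => Finset.sum_nonneg fun b _ =>
      Finset.sum_nonneg fun v _ => hP0 _ _ _ _
  have hWT : ∀ w, ∑ v, Tf w v = Wf w := by
    intro w
    rw [hWf]
    exact (sum_comm3 (α := K') (β := K') (γ := V)
      (f := fun a b v => P a b w v)).symm
  have hWsum : ∑ w, Wf w = 1 := by
    rw [← hP1]
    exact (sum_comm3 (α := K') (β := K') (γ := W)
      (f := fun a b w => ∑ v, P a b w v)).symm
  set c0 : ℝ := Real.sqrt ((2*ε)^2 / Vc) with hc0
  have hc00 : 0 ≤ c0 := Real.sqrt_nonneg _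
  have hc0V : c0 * Real.sqrt Vc = 2*ε := by
    rw [hc0, ← Real.sqrt_mul (by positivity) Vc,
      div_mul_cancel₀ _ (ne_of_gt hVr), Real.sqrt_sq (by positivity)]
  -- Cauchy-Schwarz over v
  have CSv : ∀ w, ∑ v, Real.sqrt (Tf w v) ≤ Real.sqrt Vc * Real.sqrt (Wf w) := by
    intro w
    have h1 : ∑ v, Real.sqrt (Tf w v) = ∑ v, |Real.sqrt (Tf w v)| :=
      Finset.sum_congr rfl fun v _ => (abs_of_nonneg (Real.sqrt_nonneg _)).symm
    rw [h1]
    refine (sum_abs_le_sqrt (fun v => Real.sqrt (Tf w v))).trans ?_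
    have h2 : ∑ v, (Real.sqrt (Tf w v))^2 = Wf w := by
      rw [Finset.sum_congr rfl fun v _ => Real.sq_sqrt (hT0 w v)]
      exact hWT w
    rw [h2, ← hVc, Real.sqrt_mul hVr.le]
  -- the per (k,w,v) bound
  have key : ∀ (k : Fin N) (w : W) (v : V),
      (∑ κ : K' → Fin N,
        |∑ a, ((if κ a = k then (1:ℝ) else 0) - 1/(N:ℝ)) * R a w v|)
        ≤ E * (c0 * (Real.sqrt (Wf w) * Real.sqrt (Tf w v))) := by
    intro k w v
    set S : ℝ := ∑ a, (R a w v)^2 with hS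
    have hS0 : 0 ≤ S := Finset.sum_nonneg fun a _ => sq_nonneg _
    have h2 : ∑ κ : K' → Fin N,
        (∑ a, ((if κ a = k then (1:ℝ) else 0) - 1/(N:ℝ)) * R a w v)^2
        = (N:ℝ)^(Mn - 1) * (1 - 1/(N:ℝ)) * S := by
      have := sum_sq_indicator (ι := K') (β := Fin N) k (fun a => R a w v)
      simp only [Fintype.card_fin] at this
      rw [this, hMn]
    have h1 := sum_abs_le_sqrt (α := K' → Fin N)
      (fun κ => ∑ a, ((if κ a = k then (1:ℝ) else 0) - 1/(N:ℝ)) * R a w v)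
    rw [h2] at h1
    refine h1.trans ?_
    have hNN : (N:ℝ) * (1 - 1/(N:ℝ)) = (N:ℝ) - 1 := by field_simp
    have hFE : F * ((N:ℝ)^(Mn - 1) * (1 - 1/(N:ℝ)) * S) = E^2 * (((N:ℝ)-1) * S) := by
      rw [hFeq, ← hNN, hE]
      ring
    rw [hFE, Real.sqrt_mul (sq_nonneg E), Real.sqrt_sq hE0]
    apply mul_le_mul_of_nonneg_left _ hE0
    -- sqrt((N-1) S) ≤ c0 * (sqrt Wf * sqrt Tf)
    have hSb : S ≤ (Wf w / (Mn:ℝ)) * Tf w v := by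
      have hstep : ∀ a, (R a w v)^2 ≤ (Wf w / (Mn:ℝ)) * R a w v := by
        intro a
        rw [sq]
        exact mul_le_mul_of_nonneg_right (hRW a w v) (hR0 a w v)
      calc S ≤ ∑ a, (Wf w / (Mn:ℝ)) * R a w v := Finset.sum_le_sum fun a _ => hstep a
        _ = (Wf w / (Mn:ℝ)) * ∑ a, R a w v := by rw [Finset.mul_sum]
        _ ≤ (Wf w / (Mn:ℝ)) * Tf w v := by
            exact mul_le_mul_of_nonneg_left (hRT w v)
              (div_nonneg (hWf0 w) hMr.le)
    have hchain : ((N:ℝ)-1) * S ≤ ((2*ε)^2 / Vc) * (Wf w * Tf w v) := by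
      have h3 : ((N:ℝ)-1) * S ≤ ((N:ℝ)-1) * ((Wf w / (Mn:ℝ)) * Tf w v) :=
        mul_le_mul_of_nonneg_left hSb hN1
      have h4 : ((N:ℝ)-1) ≤ (2*ε)^2 * (Mn:ℝ) / Vc := by
        rw [le_div_iff₀ hVr]
        exact hNbound
      have h5 : ((N:ℝ)-1) * ((Wf w / (Mn:ℝ)) * Tf w v)
          ≤ ((2*ε)^2 * (Mn:ℝ) / Vc) * ((Wf w / (Mn:ℝ)) * Tf w v) := by
        apply mul_le_mul_of_nonneg_right h4
        exact mul_nonneg (div_nonneg (hWf0 w) hMr.le) (hT0 w v)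
      have h6 : ((2*ε)^2 * (Mn:ℝ) / Vc) * ((Wf w / (Mn:ℝ)) * Tf w v)
          = ((2*ε)^2 / Vc) * (Wf w * Tf w v) := by
        field_simp
      linarith
    refine (Real.sqrt_le_sqrt hchain).trans ?_
    rw [Real.sqrt_mul (by positivity), Real.sqrt_mul (hWf0 w), ← hc0]
  have hG : ∑ w, ∑ v, Real.sqrt (Wf w) * Real.sqrt (Tf w v) ≤ Real.sqrt Vc := by
    have e1 : ∀ w, ∑ v, Real.sqrt (Wf w) * Real.sqrt (Tf w v)
        = Real.sqrt (Wf w) * ∑ v, Real.sqrt (Tf w v) := fun w => (Finset.mul_sum _ _ _).symm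
    rw [Finset.sum_congr rfl fun w _ => e1 w]
    calc ∑ w, Real.sqrt (Wf w) * ∑ v, Real.sqrt (Tf w v)
        ≤ ∑ w, Real.sqrt (Wf w) * (Real.sqrt Vc * Real.sqrt (Wf w)) :=
          Finset.sum_le_sum fun w _ =>
            mul_le_mul_of_nonneg_left (CSv w) (Real.sqrt_nonneg _)
      _ = Real.sqrt Vc * ∑ w, Wf w := by
          rw [Finset.mul_sum]
          refine Finset.sum_congr rfl fun w _ => ?_
          calc Real.sqrt (Wf w) * (Real.sqrt Vc * Real.sqrt (Wf w))
              = Real.sqrt Vc * (Real.sqrt (Wf w) * Real.sqrt (Wf w)) := by ring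
            _ = Real.sqrt Vc * Wf w := by rw [Real.mul_self_sqrt (hWf0 w)]
      _ = Real.sqrt Vc := by rw [hWsum, mul_one]
  have swap : (∑ κ : K' → Fin N, ∑ k : Fin N, ∑ w, ∑ v,
      |∑ a, ((if κ a = k then (1:ℝ) else 0) - 1/(N:ℝ)) * R a w v|)
      = ∑ k : Fin N, ∑ w, ∑ v, ∑ κ : K' → Fin N,
          |∑ a, ((if κ a = k then (1:ℝ) else 0) - 1/(N:ℝ)) * R a w v| :=
    sum_rot4 (α := K' → Fin N) (β := Fin N) (γ := W) (δ := V)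
      (f := fun κ k w v => |∑ a, ((if κ a = k then (1:ℝ) else 0) - 1/(N:ℝ)) * R a w v|)
  rw [swap]
  have step1 : (∑ k : Fin N, ∑ w, ∑ v, ∑ κ : K' → Fin N,
      |∑ a, ((if κ a = k then (1:ℝ) else 0) - 1/(N:ℝ)) * R a w v|)
      ≤ ∑ k : Fin N, ∑ w, ∑ v, E * (c0 * (Real.sqrt (Wf w) * Real.sqrt (Tf w v))) :=
    Finset.sum_le_sum fun k _ => Finset.sum_le_sum fun w _ =>
      Finset.sum_le_sum fun v _ => key k w v
  have step2 : (∑ k : Fin N, ∑ w, ∑ v, E * (c0 * (Real.sqrt (Wf w) * Real.sqrt (Tf w v))))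
      = (N:ℝ) * (E * c0 * ∑ w, ∑ v, Real.sqrt (Wf w) * Real.sqrt (Tf w v)) := by
    have e2 : (∑ w, ∑ v, E * (c0 * (Real.sqrt (Wf w) * Real.sqrt (Tf w v))))
        = E * c0 * ∑ w, ∑ v, Real.sqrt (Wf w) * Real.sqrt (Tf w v) := by
      rw [Finset.mul_sum]
      refine Finset.sum_congr rfl fun w _ => ?_
      rw [Finset.mul_sum]
      exact Finset.sum_congr rfl fun v _ => by ring
    rw [Finset.sum_congr rfl fun (k : Fin N) _ => e2, Finset.sum_const,
      Finset.card_univ, Fintype.card_fin, nsmul_eq_mul]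
  have step3 : (N:ℝ) * (E * c0 * ∑ w, ∑ v, Real.sqrt (Wf w) * Real.sqrt (Tf w v))
      ≤ (N:ℝ) * (E * c0 * Real.sqrt Vc) := by
    apply mul_le_mul_of_nonneg_left _ hNr.le
    exact mul_le_mul_of_nonneg_left hG (by positivity)
  have step4 : (N:ℝ) * (E * c0 * Real.sqrt Vc) = F * (2*ε) := by
    rw [hFeq, ← hc0V]
    ring
  linarith


private lemma key_lemma {K' W V : Type*} [Fintype K'] [Fintype W] [Fintype V] [DecidableEq K']
    (P : K' → K' → W → V → ℝ)
    (hP0 : ∀ a b w v, 0 ≤ P a b w v)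
    (hP1 : ∑ a, ∑ b, ∑ w, ∑ v, P a b w v = 1)
    (ε : ℝ) (hε0 : 0 < ε)
    (hsec : (∑ a, ∑ b, ∑ w,
        |(∑ v, P a b w v)
          - (if a = b then (1 : ℝ) / (Fintype.card K' : ℝ) else 0)
            * (∑ a', ∑ b', ∑ v, P a' b' w v)|) / 2 ≤ ε)
    (N : ℕ) (hN0 : 0 < N)
    (hNbound : ((N:ℝ) - 1) * (Fintype.card V : ℝ) ≤ (2*ε)^2 * (Fintype.card K' : ℝ)) :
    ∃ κ : K' → Fin N,
      (∑ k : Fin N, ∑ k' : Fin N, ∑ w, ∑ v,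
        |(∑ a, ∑ b, if κ a = k ∧ κ b = k' then P a b w v else 0)
          - (if k = k' then (1 : ℝ) / (N : ℝ) else 0)
            * (∑ a, ∑ b, P a b w v)|) / 2 ≤ 2 * ε := by
  classical
  have hK'ne : Nonempty K' := by
    by_contra h
    rw [not_nonempty_iff] at h
    simp at hP1
  have hVne : Nonempty V := by
    by_contra h
    rw [not_nonempty_iff] at h
    simp at hP1
  obtain ⟨R, hR0, hRP, hRW, hRsum⟩ := exists_R P hP0
  have hsmooth : 1 - (∑ a, ∑ w, ∑ v, R a w v) ≤ ε :=
    smoothing_bound P hP0 hP1 ε hsec R hRsum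
  have hRT : ∀ w v, (∑ a, R a w v) ≤ ∑ a, ∑ b, P a b w v := by
    intro w v
    apply Finset.sum_le_sum
    intro a _
    exact (hRP a w v).trans
      (Finset.single_le_sum (fun b _ => hP0 a b w v) (Finset.mem_univ a))
  have hexp := expectation_bound P hP0 hP1 ε hε0 R hR0 hRW hRT N hN0 hNbound
  have hNonempty : Nonempty (K' → Fin N) := ⟨fun _ => ⟨0, hN0⟩⟩
  set F : ℝ := (Fintype.card (K' → Fin N) : ℝ) with hFdef
  have hF0 : 0 ≤ F := by positivity
  have htot : (∑ κ : K' → Fin N, (∑ k : Fin N, ∑ k' : Fin N, ∑ w, ∑ v,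
      |(∑ a, ∑ b, if κ a = k ∧ κ b = k' then P a b w v else 0)
        - (if k = k' then (1 : ℝ) / (N : ℝ) else 0) * (∑ a, ∑ b, P a b w v)|))
      ≤ ∑ _κ : K' → Fin N, (4 * ε) := by
    have hbound : ∀ κ : K' → Fin N,
        (∑ k : Fin N, ∑ k' : Fin N, ∑ w, ∑ v,
          |(∑ a, ∑ b, if κ a = k ∧ κ b = k' then P a b w v else 0)
            - (if k = k' then (1 : ℝ) / (N : ℝ) else 0) * (∑ a, ∑ b, P a b w v)|)
        ≤ 2 * (1 - ∑ a, ∑ w, ∑ v, R a w v)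
          + ∑ k : Fin N, ∑ w, ∑ v,
              |∑ a, ((if κ a = k then (1:ℝ) else 0) - 1/(N:ℝ)) * R a w v| :=
      fun κ => decomp P hP0 hP1 R hR0 hRP N hN0 κ
    calc (∑ κ : K' → Fin N, (∑ k : Fin N, ∑ k' : Fin N, ∑ w, ∑ v,
        |(∑ a, ∑ b, if κ a = k ∧ κ b = k' then P a b w v else 0)
          - (if k = k' then (1 : ℝ) / (N : ℝ) else 0) * (∑ a, ∑ b, P a b w v)|))
        ≤ ∑ κ : K' → Fin N, (2 * (1 - ∑ a, ∑ w, ∑ v, R a w v)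
            + ∑ k : Fin N, ∑ w, ∑ v,
                |∑ a, ((if κ a = k then (1:ℝ) else 0) - 1/(N:ℝ)) * R a w v|) :=
          Finset.sum_le_sum fun κ _ => hbound κ
      _ = F * (2 * (1 - ∑ a, ∑ w, ∑ v, R a w v))
          + ∑ κ : K' → Fin N, (∑ k : Fin N, ∑ w, ∑ v,
              |∑ a, ((if κ a = k then (1:ℝ) else 0) - 1/(N:ℝ)) * R a w v|) := by
          rw [Finset.sum_add_distrib, Finset.sum_const, Finset.card_univ, nsmul_eq_mul]
      _ ≤ F * (2 * ε) + F * (2 * ε) := by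
          have h1 : F * (2 * (1 - ∑ a, ∑ w, ∑ v, R a w v)) ≤ F * (2 * ε) :=
            mul_le_mul_of_nonneg_left (by linarith) hF0
          linarith [hexp]
      _ = ∑ _κ : K' → Fin N, (4 * ε) := by
          rw [Finset.sum_const, Finset.card_univ, nsmul_eq_mul]
          ring
  obtain ⟨κ, _, hκ⟩ := Finset.exists_le_of_sum_le Finset.univ_nonempty htot
  exact ⟨κ, by linarith⟩

/-- **Secret key extraction surviving extra side information.** If `(K'_X, K'_Y, W, V)`
has joint pmf `P` and `(K'_X, K'_Y)` is an `ε`-secret key given eavesdropper observation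
`W`, i.e. `d(P_{K'_X K'_Y W}, P⁽²⁾_unif × P_W) ≤ ε`, then there is a key alphabet of size
`N` with `log₂ N ≥ log₂|𝒦'| − log₂|𝒱| − 2·log₂(1/(2ε))` and a function `κ : 𝒦' → Fin N`
such that `(κ(K'_X), κ(K'_Y))` is a `2ε`-secret key given the extended observation
`(W, V)`. -/
theorem secret_key_survives_side_information
    {K' W V : Type*} [Fintype K'] [Fintype W] [Fintype V] [DecidableEq K']
    (P : K' → K' → W → V → ℝ)
    (hP0 : ∀ a b w v, 0 ≤ P a b w v)
    (hP1 : ∑ a, ∑ b, ∑ w, ∑ v, P a b w v = 1)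
    (ε : ℝ) (hε0 : 0 < ε) (hε1 : ε < 1 / 2)
    (hsec : (∑ a, ∑ b, ∑ w,
        |(∑ v, P a b w v)
          - (if a = b then (1 : ℝ) / (Fintype.card K' : ℝ) else 0)
            * (∑ a', ∑ b', ∑ v, P a' b' w v)|) / 2 ≤ ε) :
    ∃ N : ℕ, 0 < N ∧
      Real.logb 2 (N : ℝ)
        ≥ Real.logb 2 (Fintype.card K' : ℝ) - Real.logb 2 (Fintype.card V : ℝ)
          - 2 * Real.logb 2 (1 / (2 * ε)) ∧
      ∃ κ : K' → Fin N,
        (∑ k : Fin N, ∑ k' : Fin N, ∑ w, ∑ v,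
          |(∑ a, ∑ b, if κ a = k ∧ κ b = k' then P a b w v else 0)
            - (if k = k' then (1 : ℝ) / (N : ℝ) else 0)
              * (∑ a, ∑ b, P a b w v)|) / 2 ≤ 2 * ε := by
  classical
  have hK'ne : Nonempty K' := by
    by_contra h
    rw [not_nonempty_iff] at h
    simp at hP1
  have hVne : Nonempty V := by
    by_contra h
    rw [not_nonempty_iff] at h
    simp at hP1
  have hM0 : (0:ℝ) < (Fintype.card K' : ℝ) := by exact_mod_cast Fintype.card_pos
  have hVc0 : (0:ℝ) < (Fintype.card V : ℝ) := by exact_mod_cast Fintype.card_pos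
  have h2ε : (0:ℝ) < 2 * ε := by linarith
  set M : ℝ := (Fintype.card K' : ℝ) with hMdef
  set Vc : ℝ := (Fintype.card V : ℝ) with hVcdef
  set x : ℝ := (2*ε)^2 * M / Vc with hxdef
  have hx0 : 0 < x := by positivity
  refine ⟨⌈x⌉₊, Nat.ceil_pos.mpr hx0, ?_, ?_⟩
  · -- log bound
    have hNx : x ≤ (⌈x⌉₊ : ℝ) := Nat.le_ceil x
    have hlogN : Real.logb 2 x ≤ Real.logb 2 (⌈x⌉₊ : ℝ) :=
      Real.logb_le_logb_of_le one_lt_two hx0 hNx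
    have hxlog : Real.logb 2 x = 2 * Real.logb 2 (2*ε) + Real.logb 2 M - Real.logb 2 Vc := by
      rw [hxdef, Real.logb_div (by positivity) (ne_of_gt hVc0),
        Real.logb_mul (by positivity) (ne_of_gt hM0), Real.logb_pow]
      push_cast
      ring
    have hinv : Real.logb 2 (1 / (2*ε)) = - Real.logb 2 (2*ε) := by
      rw [one_div, Real.logb_inv]
    rw [ge_iff_le]
    linarith
  · -- secrecy
    apply key_lemma P hP0 hP1 ε hε0 hsec _ (Nat.ceil_pos.mpr hx0)
    have hceil : (⌈x⌉₊ : ℝ) < x + 1 := Nat.ceil_lt_add_one hx0.le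
    have hxVc : x * Vc = (2*ε)^2 * M := by
      rw [hxdef]; field_simp
    nlinarith [hVc0]
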